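/- Let X be a nonempty finite state space, U a nonempty finite action space, γ ∈ [0,1), and π a policy. Let r : X × U → ℝ be a reward function with values in [0,1], and let p^S and p^T be two transition kernels on X × U such that p^T(x′|x,u) > 0 for all x, u, x′. Let V_{p^S}^π and V_{p^T}^π be the value functions of π under kernels p^S and p^T respectively (with the same reward r, and with the corresponding Q-functions satisfying their Bellman equations). Then max_{x∈X} |V_{p^S}^π(x) − V_{p^T}^π(x)| ≤ (γ/(1−γ)²) · max_{(x,u)} √( (1/2) D_KL(p^S(·|x,u) ‖ p^T(·|x,u)) ). (Corollary 2.) -/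

import Mathlib

open Finset

section ScalarCore

private noncomputable def gfun (t : ℝ) : ℝ :=
  t * Real.log t - t + 1 - (3/2) * (t-1)^2 / (t+2)

private noncomputable def dfun (t : ℝ) : ℝ :=
  Real.log t - (3/2) * ((t-1)*(t+5)) / (t+2)^2

private lemma hasDerivAt_gfun {t : ℝ} (ht : 0 < t) : HasDerivAt gfun (dfun t) t := by
  have h2 : (t:ℝ) + 2 ≠ 0 := by linarith
  have h1 : HasDerivAt (fun t : ℝ => t * Real.log t) (Real.log t + 1) t := by
    have := (hasDerivAt_id t).mul (Real.hasDerivAt_log ht.ne')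
    refine this.congr_deriv ?_
    simp only [id_eq]
    field_simp
  have hu : HasDerivAt (fun t : ℝ => (t-1)^2) (2*(t-1)) t := by
    have := ((hasDerivAt_id t).sub_const 1).pow 2
    refine this.congr_deriv ?_; simp only [id_eq]; ring
  have hv : HasDerivAt (fun t : ℝ => t+2) 1 t := (hasDerivAt_id t).add_const 2
  have hq : HasDerivAt (fun t : ℝ => (3/2) * (t-1)^2 / (t+2))
      ((3/2) * ((t-1)*(t+5)) / (t+2)^2) t := by
    have := ((hu.const_mul (3/2)).div hv h2)
    refine this.congr_deriv ?_
    field_simp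
    ring
  have := ((h1.sub (hasDerivAt_id t)).add_const 1).sub hq
  refine this.congr_deriv ?_
  unfold dfun
  ring

private lemma hasDerivAt_dfun {t : ℝ} (ht : 0 < t) :
    HasDerivAt dfun (1/t - 27/(t+2)^3) t := by
  have h2 : (t:ℝ) + 2 ≠ 0 := by linarith
  have hu : HasDerivAt (fun t : ℝ => (3/2) * ((t-1)*(t+5))) ((3/2) * (2*t+4)) t := by
    have := (((hasDerivAt_id t).sub_const 1).mul ((hasDerivAt_id t).add_const 5)).const_mul
      (3/2 : ℝ)
    refine this.congr_deriv ?_; simp only [id_eq]; ring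
  have hv : HasDerivAt (fun t : ℝ => (t+2)^2) (2*(t+2)) t := by
    have := ((hasDerivAt_id t).add_const 2).pow 2
    refine this.congr_deriv ?_; simp only [id_eq]; ring
  have hq := hu.div hv (pow_ne_zero 2 h2)
  have := (Real.hasDerivAt_log ht.ne').sub hq
  refine this.congr_deriv ?_
  rw [div_sub_div _ _ (by positivity) (by positivity)]
  field_simp
  ring

private lemma dfun_one : dfun 1 = 0 := by simp [dfun]

private lemma gfun_one : gfun 1 = 0 := by norm_num [gfun]

private lemma deriv_dfun_nonneg {t : ℝ} (ht : 0 < t) : 0 ≤ 1/t - 27/(t+2)^3 := by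
  rw [sub_nonneg, div_le_div_iff₀ (by positivity) ht]
  nlinarith [sq_nonneg (t-1), ht.le]

private lemma dfun_nonneg {t : ℝ} (ht : 1 ≤ t) : 0 ≤ dfun t := by
  have hmono : MonotoneOn dfun (Set.Ici 1) := by
    apply monotoneOn_of_deriv_nonneg (convex_Ici 1)
    · intro s hs
      exact (hasDerivAt_dfun (by simp at hs; linarith)).continuousAt.continuousWithinAt
    · intro s hs
      rw [interior_Ici] at hs
      exact (hasDerivAt_dfun (by simp at hs; linarith)).differentiableAt.differentiableWithinAt
    · intro s hs
      rw [interior_Ici] at hs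
      rw [(hasDerivAt_dfun (by simp at hs; linarith)).deriv]
      exact deriv_dfun_nonneg (by simp at hs; linarith)
  have := hmono (by simp : (1:ℝ) ∈ Set.Ici 1) (by simpa using ht) ht
  rwa [dfun_one] at this

private lemma dfun_nonpos {t : ℝ} (ht0 : 0 < t) (ht : t ≤ 1) : dfun t ≤ 0 := by
  have hmono : MonotoneOn dfun (Set.Icc t 1) := by
    apply monotoneOn_of_deriv_nonneg (convex_Icc t 1)
    · intro s hs
      exact (hasDerivAt_dfun (lt_of_lt_of_le ht0 hs.1)).continuousAt.continuousWithinAt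
    · intro s hs
      rw [interior_Icc] at hs
      exact (hasDerivAt_dfun (lt_trans ht0 hs.1)).differentiableAt.differentiableWithinAt
    · intro s hs
      rw [interior_Icc] at hs
      rw [(hasDerivAt_dfun (lt_trans ht0 hs.1)).deriv]
      exact deriv_dfun_nonneg (lt_trans ht0 hs.1)
  have := hmono (by simp [ht0.le, ht] : t ∈ Set.Icc t 1) (by simp [ht] : (1:ℝ) ∈ Set.Icc t 1) ht
  rwa [dfun_one] at this

private lemma gfun_nonneg {t : ℝ} (ht : 0 ≤ t) : 0 ≤ gfun t := by
  rcases le_or_gt 1 t with h1 | h1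
  · have hmono : MonotoneOn gfun (Set.Ici 1) := by
      apply monotoneOn_of_deriv_nonneg (convex_Ici 1)
      · intro s hs
        exact (hasDerivAt_gfun (by simp at hs; linarith)).continuousAt.continuousWithinAt
      · intro s hs
        rw [interior_Ici] at hs
        exact (hasDerivAt_gfun (by simp at hs; linarith)).differentiableAt.differentiableWithinAt
      · intro s hs
        rw [interior_Ici] at hs
        rw [(hasDerivAt_gfun (by simp at hs; linarith)).deriv]
        exact dfun_nonneg (le_of_lt (by simpa using hs))
    have := hmono (by simp : (1:ℝ) ∈ Set.Ici 1) (by simpa using h1) h1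
    rwa [gfun_one] at this
  · have hanti : AntitoneOn gfun (Set.Icc 0 1) := by
      apply antitoneOn_of_deriv_nonpos (convex_Icc 0 1)
      · apply ContinuousOn.sub
        apply ContinuousOn.add
        apply ContinuousOn.sub
        · exact Real.continuous_mul_log.continuousOn
        · exact continuousOn_id
        · exact continuousOn_const
        · exact ContinuousOn.div (by fun_prop) (by fun_prop)
            (fun s hs => by simp at hs; intro h; linarith [hs.1])
      · intro s hs
        rw [interior_Icc] at hs
        exact (hasDerivAt_gfun hs.1).differentiableAt.differentiableWithinAt
      · intro s hs
        rw [interior_Icc] at hs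
        rw [(hasDerivAt_gfun hs.1).deriv]
        exact dfun_nonpos hs.1 hs.2.le
    have := hanti (by simp [ht, h1.le] : t ∈ Set.Icc 0 1) (by simp : (1:ℝ) ∈ Set.Icc 0 1) h1.le
    rw [gfun_one] at this
    exact this

private lemma kl_pointwise {a b : ℝ} (ha : 0 ≤ a) (hb : 0 < b) :
    (3/2) * (a-b)^2 / (a+2*b) ≤ a * Real.log (a/b) - a + b := by
  have h := gfun_nonneg (div_nonneg ha hb.le)
  have hb' : b ≠ 0 := hb.ne'
  have h1 : a + 2*b ≠ 0 := by positivity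
  have hid : a * Real.log (a/b) - a + b - (3/2) * (a-b)^2 / (a+2*b) = b * gfun (a/b) := by
    unfold gfun
    field_simp
  nlinarith [mul_nonneg hb.le h]

private lemma pinsker {ι : Type*} [Fintype ι] (p q : ι → ℝ)
    (hp0 : ∀ i, 0 ≤ p i) (hq0 : ∀ i, 0 < q i)
    (hp1 : ∑ i, p i = 1) (hq1 : ∑ i, q i = 1) :
    ∑ i, |p i - q i| ≤ Real.sqrt (2 * ∑ i, p i * Real.log (p i / q i)) := by
  set KL := ∑ i, p i * Real.log (p i / q i) with hKL
  have hS : (3/2) * ∑ i, (p i - q i)^2 / (p i + 2 * q i) ≤ KL := by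
    have h := Finset.sum_le_sum
      (fun i (_ : i ∈ Finset.univ) => kl_pointwise (hp0 i) (hq0 i))
    rw [Finset.sum_add_distrib, Finset.sum_sub_distrib, hp1, hq1] at h
    calc (3/2) * ∑ i, (p i - q i)^2 / (p i + 2 * q i)
        = ∑ i, (3/2) * (p i - q i)^2 / (p i + 2 * q i) := by
          rw [Finset.mul_sum]; exact Finset.sum_congr rfl fun i _ => by ring
      _ ≤ KL - 1 + 1 := h
      _ = KL := by ring
  have hCS : (∑ i, |p i - q i|)^2 ≤ 2 * KL := by
    have key := Finset.sum_mul_sq_le_sq_mul_sq Finset.univ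
      (fun i => Real.sqrt (p i + 2 * q i))
      (fun i => |p i - q i| / Real.sqrt (p i + 2 * q i))
    have hw : ∀ i, (0:ℝ) < p i + 2 * q i := fun i => by
      have := hp0 i; have := hq0 i; linarith
    have e1 : ∀ i, Real.sqrt (p i + 2 * q i) *
        (|p i - q i| / Real.sqrt (p i + 2 * q i)) = |p i - q i| := fun i =>
      mul_div_cancel₀ _ (Real.sqrt_pos.mpr (by have := hp0 i; have := hq0 i; linarith)).ne'
    have e2 : ∀ i, (Real.sqrt (p i + 2 * q i))^2 = p i + 2 * q i := fun i =>
      Real.sq_sqrt (hw i).le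
    have e3 : ∀ i, (|p i - q i| / Real.sqrt (p i + 2 * q i))^2 =
        (p i - q i)^2 / (p i + 2 * q i) := fun i => by
      rw [div_pow, sq_abs, Real.sq_sqrt (hw i).le]
    simp only [e1, e2, e3] at key
    have hsum3 : ∑ i, (p i + 2 * q i) = 3 := by
      rw [Finset.sum_add_distrib, ← Finset.mul_sum, hp1, hq1]; norm_num
    rw [hsum3] at key
    nlinarith [key, hS]
  have h0 : 0 ≤ ∑ i, |p i - q i| := Finset.sum_nonneg fun i _ => abs_nonneg _
  calc ∑ i, |p i - q i| = Real.sqrt ((∑ i, |p i - q i|)^2) := (Real.sqrt_sq h0).symm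
    _ ≤ Real.sqrt (2 * KL) := Real.sqrt_le_sqrt hCS

end ScalarCore

private lemma Q_bounds {X U : Type*} [Fintype X] [Fintype U] [Nonempty X] [Nonempty U]
    {γ : ℝ} (hγ0 : 0 ≤ γ) (hγ1 : γ < 1)
    {π : X → U → ℝ} (hπ_nonneg : ∀ x u, 0 ≤ π x u) (hπ_sum : ∀ x, ∑ u, π x u = 1)
    {r : X → U → ℝ} (hr0 : ∀ x u, 0 ≤ r x u) (hr1 : ∀ x u, r x u ≤ 1)
    {p : X → U → X → ℝ} (hp0 : ∀ x u x', 0 ≤ p x u x') (hp1 : ∀ x u, ∑ x', p x u x' = 1)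
    {Q : X → U → ℝ}
    (hQ : ∀ x u, Q x u = r x u + γ * ∑ x', p x u x' * ∑ u', π x' u' * Q x' u') :
    ∀ x u, 0 ≤ Q x u ∧ Q x u ≤ 1/(1-γ) := by
  classical
  have hne : (Finset.univ : Finset (X × U)).Nonempty := Finset.univ_nonempty
  set M := Finset.univ.sup' hne (fun z : X × U => Q z.1 z.2) with hMdef
  set m := Finset.univ.inf' hne (fun z : X × U => Q z.1 z.2) with hmdef
  have hM : ∀ x u, Q x u ≤ M := fun x u => Finset.le_sup' (fun z : X × U => Q z.1 z.2) (Finset.mem_univ (x, u))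
  have hm : ∀ x u, m ≤ Q x u := fun x u => Finset.inf'_le (fun z : X × U => Q z.1 z.2) (Finset.mem_univ (x, u))
  have hVM : ∀ x' : X, ∑ u', π x' u' * Q x' u' ≤ M := by
    intro x'
    calc ∑ u', π x' u' * Q x' u' ≤ ∑ u', π x' u' * M :=
          Finset.sum_le_sum fun u' _ => mul_le_mul_of_nonneg_left (hM x' u') (hπ_nonneg x' u')
      _ = M := by rw [← Finset.sum_mul, hπ_sum, one_mul]
  have hVm : ∀ x' : X, m ≤ ∑ u', π x' u' * Q x' u' := by
    intro x'
    calc m = ∑ u', π x' u' * m := by rw [← Finset.sum_mul, hπ_sum, one_mul]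
      _ ≤ ∑ u', π x' u' * Q x' u' :=
          Finset.sum_le_sum fun u' _ => mul_le_mul_of_nonneg_left (hm x' u') (hπ_nonneg x' u')
  have hMle : M ≤ 1 + γ * M := by
    obtain ⟨z, _, hz⟩ := Finset.exists_mem_eq_sup' hne (fun z : X × U => Q z.1 z.2)
    have hMz : M = Q z.1 z.2 := hMdef.trans hz
    have hin : ∑ x', p z.1 z.2 x' * ∑ u', π x' u' * Q x' u' ≤ M := by
      calc ∑ x', p z.1 z.2 x' * ∑ u', π x' u' * Q x' u'
          ≤ ∑ x', p z.1 z.2 x' * M := Finset.sum_le_sum fun x' _ =>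
            mul_le_mul_of_nonneg_left (hVM x') (hp0 _ _ _)
        _ = M := by rw [← Finset.sum_mul, hp1, one_mul]
    have h1 := hr1 z.1 z.2
    calc M = r z.1 z.2 + γ * ∑ x', p z.1 z.2 x' * ∑ u', π x' u' * Q x' u' := by
          rw [hMz, hQ]
      _ ≤ 1 + γ * M := by nlinarith
  have hmge : γ * m ≤ m := by
    obtain ⟨z, _, hz⟩ := Finset.exists_mem_eq_inf' hne (fun z : X × U => Q z.1 z.2)
    have hmz : m = Q z.1 z.2 := hmdef.trans hz
    have hin : m ≤ ∑ x', p z.1 z.2 x' * ∑ u', π x' u' * Q x' u' := by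
      calc m = ∑ x', p z.1 z.2 x' * m := by rw [← Finset.sum_mul, hp1, one_mul]
        _ ≤ ∑ x', p z.1 z.2 x' * ∑ u', π x' u' * Q x' u' := Finset.sum_le_sum fun x' _ =>
            mul_le_mul_of_nonneg_left (hVm x') (hp0 _ _ _)
    have h0 := hr0 z.1 z.2
    calc γ * m ≤ r z.1 z.2 + γ * ∑ x', p z.1 z.2 x' * ∑ u', π x' u' * Q x' u' := by nlinarith
      _ = m := by rw [hmz, hQ]
  intro x u
  constructor
  · have hm0 : 0 ≤ m := by nlinarith
    linarith [hm x u]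
  · have hM1 : M ≤ 1/(1-γ) := by
      rw [le_div_iff₀ (by linarith)]
      nlinarith
    linarith [hM x u]



/-- **Corollary 2.**
For a fixed policy `π`, a reward `r` with values in `[0,1]`, and two transition
kernels `pS`, `pT` with `pT` everywhere positive, the corresponding value functions
satisfy
`max_x |V_{pS}^π(x) − V_{pT}^π(x)|
  ≤ (γ/(1−γ)²) max_{(x,u)} √((1/2) D_KL(pS(·|x,u) ‖ pT(·|x,u)))`,
where `D_KL(P‖Q) = Σ_ω P ω log (P ω / Q ω)`. -/
theorem value_gap_kl_bound
    {X U : Type*} [Fintype X] [Fintype U] [Nonempty X] [Nonempty U]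
    (γ : ℝ) (hγ0 : 0 ≤ γ) (hγ1 : γ < 1)
    (π : X → U → ℝ)
    (hπ_nonneg : ∀ x u, 0 ≤ π x u) (hπ_sum : ∀ x, ∑ u, π x u = 1)
    (r : X → U → ℝ)
    (hr0 : ∀ x u, 0 ≤ r x u) (hr1 : ∀ x u, r x u ≤ 1)
    (pS pT : X → U → X → ℝ)
    (hpS_nonneg : ∀ x u x', 0 ≤ pS x u x') (hpS_sum : ∀ x u, ∑ x', pS x u x' = 1)
    (hpT_pos : ∀ x u x', 0 < pT x u x') (hpT_sum : ∀ x u, ∑ x', pT x u x' = 1)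
    (QS QT : X → U → ℝ)
    (hQS : ∀ x u, QS x u = r x u + γ * ∑ x', pS x u x' * ∑ u', π x' u' * QS x' u')
    (hQT : ∀ x u, QT x u = r x u + γ * ∑ x', pT x u x' * ∑ u', π x' u' * QT x' u') :
    (⨆ x : X, |(∑ u, π x u * QS x u) - (∑ u, π x u * QT x u)|) ≤
      (γ / (1 - γ) ^ 2) *
        ⨆ q : X × U,
          Real.sqrt
            ((1 / 2) *
              ∑ x', pS q.1 q.2 x' * Real.log (pS q.1 q.2 x' / pT q.1 q.2 x')) := by
  classical
  have h1γ : (0:ℝ) < 1 - γ := by linarith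
  let VS : X → ℝ := fun x => ∑ u, π x u * QS x u
  let VT : X → ℝ := fun x => ∑ u, π x u * QT x u
  let kl : X × U → ℝ := fun q =>
    Real.sqrt ((1 / 2) * ∑ x', pS q.1 q.2 x' * Real.log (pS q.1 q.2 x' / pT q.1 q.2 x'))
  set K := ⨆ q : X × U,
      Real.sqrt ((1 / 2) * ∑ x', pS q.1 q.2 x' * Real.log (pS q.1 q.2 x' / pT q.1 q.2 x'))
    with hKdef
  set D := ⨆ x : X, |(∑ u, π x u * QS x u) - (∑ u, π x u * QT x u)| with hDdef
  have hKq : ∀ q : X × U, kl q ≤ K := fun q => le_ciSup (Finite.bddAbove_range kl) q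
  have hK0 : 0 ≤ K := le_trans (Real.sqrt_nonneg _) (hKq (Classical.arbitrary _))
  have hDx : ∀ x : X, |VS x - VT x| ≤ D :=
    fun x => le_ciSup (Finite.bddAbove_range fun x : X => |VS x - VT x|) x
  have hD0 : 0 ≤ D := le_trans (abs_nonneg _) (hDx (Classical.arbitrary _))
  have hQTb := Q_bounds hγ0 hγ1 hπ_nonneg hπ_sum hr0 hr1
    (fun x u x' => (hpT_pos x u x').le) hpT_sum hQT
  have hVT0 : ∀ x, 0 ≤ VT x := fun x =>
    Finset.sum_nonneg fun u _ => mul_nonneg (hπ_nonneg x u) (hQTb x u).1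
  have hVT1 : ∀ x, VT x ≤ 1/(1-γ) := by
    intro x
    calc VT x ≤ ∑ u, π x u * (1/(1-γ)) :=
          Finset.sum_le_sum fun u _ => mul_le_mul_of_nonneg_left (hQTb x u).2 (hπ_nonneg x u)
      _ = 1/(1-γ) := by rw [← Finset.sum_mul, hπ_sum, one_mul]
  -- Pinsker per state-action pair
  have hTV : ∀ x u, ∑ x', |pS x u x' - pT x u x'| ≤ 2 * kl (x, u) := by
    intro x u
    have hp := pinsker (pS x u) (pT x u) (hpS_nonneg x u) (hpT_pos x u)
      (hpS_sum x u) (hpT_sum x u)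
    have h2 : Real.sqrt (2 * ∑ x', pS x u x' * Real.log (pS x u x' / pT x u x'))
        = 2 * kl (x, u) := by
      show _ = 2 * Real.sqrt _
      rw [show (2:ℝ) * ∑ x', pS x u x' * Real.log (pS x u x' / pT x u x')
           = 2^2 * ((1/2) * ∑ x', pS x u x' * Real.log (pS x u x' / pT x u x')) by ring,
        Real.sqrt_mul (by positivity), Real.sqrt_sq (by norm_num)]
    rwa [h2] at hp
  -- shifted test-function bound
  have hshift : ∀ x u, |∑ x', (pS x u x' - pT x u x') * VT x'| ≤
      (1/(2*(1-γ))) * ∑ x', |pS x u x' - pT x u x'| := by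
    intro x u
    set c := 1/(2*(1-γ)) with hc
    have hc0 : 0 ≤ c := by positivity
    have h2c : 1/(1-γ) = 2*c := by rw [hc]; field_simp
    have heq : ∑ x', (pS x u x' - pT x u x') * VT x'
        = ∑ x', (pS x u x' - pT x u x') * (VT x' - c) := by
      have e1 : ∀ x' : X, (pS x u x' - pT x u x') * (VT x' - c)
          = (pS x u x' - pT x u x') * VT x' - c * (pS x u x' - pT x u x') :=
        fun x' => by ring
      rw [Finset.sum_congr rfl fun x' _ => e1 x', Finset.sum_sub_distrib, ← Finset.mul_sum,
        Finset.sum_sub_distrib, hpS_sum, hpT_sum]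
      ring
    rw [heq]
    calc |∑ x', (pS x u x' - pT x u x') * (VT x' - c)|
        ≤ ∑ x', |(pS x u x' - pT x u x') * (VT x' - c)| := Finset.abs_sum_le_sum_abs _ _
      _ ≤ ∑ x', |pS x u x' - pT x u x'| * c := Finset.sum_le_sum fun x' _ => by
          rw [abs_mul]
          exact mul_le_mul_of_nonneg_left
            (abs_le.mpr ⟨by linarith [hVT0 x'], by linarith [hVT1 x']⟩) (abs_nonneg _)
      _ = c * ∑ x', |pS x u x' - pT x u x'| := by rw [← Finset.sum_mul]; ring
  -- per state-action gap
  have hQdiffB : ∀ x u, |QS x u - QT x u| ≤ γ * (D + K/(1-γ)) := by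
    intro x u
    have hVSdef : ∀ x' : X, (∑ u', π x' u' * QS x' u') = VS x' := fun _ => rfl
    have hVTdef : ∀ x' : X, (∑ u', π x' u' * QT x' u') = VT x' := fun _ => rfl
    have hbell : QS x u - QT x u
        = γ * ((∑ x', pS x u x' * (VS x' - VT x')) +
            ∑ x', (pS x u x' - pT x u x') * VT x') := by
      rw [hQS, hQT]
      simp only [hVSdef, hVTdef]
      have hsplit : (∑ x', pS x u x' * (VS x' - VT x')) +
            ∑ x', (pS x u x' - pT x u x') * VT x'
          = (∑ x', pS x u x' * VS x') - ∑ x', pT x u x' * VT x' := by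
        rw [← Finset.sum_add_distrib, ← Finset.sum_sub_distrib]
        exact Finset.sum_congr rfl fun x' _ => by ring
      rw [hsplit]
      ring
    rw [hbell, abs_mul, abs_of_nonneg hγ0]
    apply mul_le_mul_of_nonneg_left _ hγ0
    have hA : |∑ x', pS x u x' * (VS x' - VT x')| ≤ D := by
      calc |∑ x', pS x u x' * (VS x' - VT x')|
          ≤ ∑ x', |pS x u x' * (VS x' - VT x')| := Finset.abs_sum_le_sum_abs _ _
        _ ≤ ∑ x', pS x u x' * D := Finset.sum_le_sum fun x' _ => by
            rw [abs_mul, abs_of_nonneg (hpS_nonneg x u x')]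
            exact mul_le_mul_of_nonneg_left (hDx x') (hpS_nonneg x u x')
        _ = D := by rw [← Finset.sum_mul, hpS_sum, one_mul]
    have hB : |∑ x', (pS x u x' - pT x u x') * VT x'| ≤ K/(1-γ) := by
      have h1 := hshift x u
      have h2 := hTV x u
      have h3 := hKq (x, u)
      calc |∑ x', (pS x u x' - pT x u x') * VT x'|
          ≤ (1/(2*(1-γ))) * ∑ x', |pS x u x' - pT x u x'| := h1
        _ ≤ (1/(2*(1-γ))) * (2*K) := by
            apply mul_le_mul_of_nonneg_left _ (by positivity)
            linarith
        _ = K/(1-γ) := by field_simp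
    calc |(∑ x', pS x u x' * (VS x' - VT x')) + ∑ x', (pS x u x' - pT x u x') * VT x'|
        ≤ |∑ x', pS x u x' * (VS x' - VT x')| +
            |∑ x', (pS x u x' - pT x u x') * VT x'| := abs_add_le _ _
      _ ≤ D + K/(1-γ) := add_le_add hA hB
  -- per state gap
  have hVdiff : ∀ x : X, |VS x - VT x| ≤ γ * (D + K/(1-γ)) := by
    intro x
    have heq : VS x - VT x = ∑ u, π x u * (QS x u - QT x u) := by
      show (∑ u, π x u * QS x u) - (∑ u, π x u * QT x u) = _
      rw [← Finset.sum_sub_distrib]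
      exact Finset.sum_congr rfl fun u _ => by ring
    calc |VS x - VT x| = |∑ u, π x u * (QS x u - QT x u)| := by rw [heq]
      _ ≤ ∑ u, |π x u * (QS x u - QT x u)| := Finset.abs_sum_le_sum_abs _ _
      _ ≤ ∑ u, π x u * (γ * (D + K/(1-γ))) := Finset.sum_le_sum fun u _ => by
          rw [abs_mul, abs_of_nonneg (hπ_nonneg x u)]
          exact mul_le_mul_of_nonneg_left (hQdiffB x u) (hπ_nonneg x u)
      _ = γ * (D + K/(1-γ)) := by rw [← Finset.sum_mul, hπ_sum, one_mul]
  have hrec : D ≤ γ * (D + K/(1-γ)) := ciSup_le hVdiff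
  rw [div_mul_eq_mul_div, le_div_iff₀ (by positivity)]
  have h2 : γ * (K/(1-γ)) * (1-γ) = γ * K := by field_simp
  nlinarith [mul_le_mul_of_nonneg_right
    (by linarith [hrec] : D - γ*D ≤ γ*(K/(1-γ))) h1γ.le, h2]
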